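/- Let h(z) = exp(-(1+z)/(1-z)) be the atomic singular inner function on the unit disk 𝔻. Then u₁(z) = log(1/((1-|z|²)|h(z)|)) is a C² solution on 𝔻 of Δu = 4|h(z)|² e^{2u}, and u₁(z) → +∞ as z approaches any point of the unit circle. -/

import Mathlib

open Complex

/-- Euclidean Laplacian of a real-valued function on `ℂ`. -/
noncomputable def lap (u : ℂ → ℝ) (z : ℂ) : ℝ :=
  fderiv ℝ (fun w => fderiv ℝ u w 1) z 1 + fderiv ℝ (fun w => fderiv ℝ u w Complex.I) z Complex.I

noncomputable def Nclm (z : ℂ) : ℂ →L[ℝ] ℝ := (2*z.re) • Complex.reCLM + (2*z.im) • Complex.imCLM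

lemma Nclm_apply (z d : ℂ) : Nclm z d = 2*z.re*d.re + 2*z.im*d.im := by
  simp [Nclm]

lemma hasFDerivAt_normSq' (z : ℂ) : HasFDerivAt Complex.normSq (Nclm z) z := by
  have h1 : HasFDerivAt (fun w : ℂ => w.re * w.re + w.im * w.im) (Nclm z) z := by
    have hr := Complex.reCLM.hasFDerivAt (x := z)
    have hi := Complex.imCLM.hasFDerivAt (x := z)
    have := (hr.mul hr).add (hi.mul hi)
    refine this.congr_fderiv ?_
    ext w
    simp [Nclm, two_mul]
    ring
  have : Complex.normSq = fun w : ℂ => w.re * w.re + w.im * w.im := by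
    funext w; exact Complex.normSq_apply w
  rw [this]; exact h1

noncomputable def reMul (c : ℂ) : ℂ →L[ℝ] ℝ :=
  Complex.reCLM.comp (((1 : ℂ →L[ℂ] ℂ).smulRight c).restrictScalars ℝ)

lemma reMul_apply (c d : ℂ) : reMul c d = (d * c).re := by
  simp [reMul, smul_eq_mul]

lemma holoRe {F : ℂ → ℂ} {c : ℂ} {z : ℂ} (hF : HasDerivAt F c z) :
    HasFDerivAt (fun w => (F w).re) (reMul c) z :=
  Complex.reCLM.hasFDerivAt.comp z (hF.hasFDerivAt.restrictScalars ℝ)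

lemma hasDerivAt_Moebius (z : ℂ) (hz : (1:ℂ) - z ≠ 0) :
    HasDerivAt (fun w => (1+w)/(1-w)) (2/(1-z)^2) z := by
  have h1 : HasDerivAt (fun w : ℂ => 1 + w) 1 z := (hasDerivAt_id z).const_add 1
  have h2 : HasDerivAt (fun w : ℂ => 1 - w) (-1) z := (hasDerivAt_id z).const_sub 1
  have := h1.div h2 hz
  refine this.congr_deriv ?_
  field_simp
  ring

lemma hasDerivAt_G (z : ℂ) (hz : (1:ℂ) - z ≠ 0) :
    HasDerivAt (fun w : ℂ => 2/(1-w)^2) (4/(1-z)^3) z := by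
  have h2 : HasDerivAt (fun w : ℂ => 1 - w) (-1) z := (hasDerivAt_id z).const_sub 1
  have hpow := h2.pow 2
  have := (hasDerivAt_const z (2:ℂ)).div hpow (pow_ne_zero 2 hz)
  refine this.congr_deriv ?_
  simp only [Pi.pow_apply]
  field_simp
  ring

lemma hasFDerivAt_logpart (z : ℂ) (hD : (1:ℝ) - Complex.normSq z ≠ 0) :
    HasFDerivAt (fun w : ℂ => -Real.log (1 - Complex.normSq w))
      ((1 - Complex.normSq z)⁻¹ • Nclm z) z := by
  have hg : HasFDerivAt (fun w : ℂ => 1 - Complex.normSq w) (-Nclm z) z :=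
    (hasFDerivAt_normSq' z).const_sub 1
  have hlog := (Real.hasDerivAt_log hD).comp_hasFDerivAt z hg
  have := hlog.neg
  refine this.congr_fderiv ?_
  ext w
  simp

/-- The model solution. -/
noncomputable def Usol (z : ℂ) : ℝ := -Real.log (1 - Complex.normSq z) + ((1+z)/(1-z)).re

noncomputable def Lc (z : ℂ) : ℂ →L[ℝ] ℝ :=
  (1 - Complex.normSq z)⁻¹ • Nclm z + reMul (2/(1-z)^2)

lemma hasFDerivAt_Usol (z : ℂ) (hD : (1:ℝ) - Complex.normSq z ≠ 0) (hz : (1:ℂ) - z ≠ 0) :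
    HasFDerivAt Usol (Lc z) z :=
  (hasFDerivAt_logpart z hD).add (holoRe (hasDerivAt_Moebius z hz))

theorem singular_inner_solution_one
    (h : ℂ → ℂ) (hdef : ∀ z, h z = Complex.exp (-(1 + z) / (1 - z)))
    (u₁ : ℂ → ℝ)
    (hu₁ : ∀ z, u₁ z = Real.log (1 / ((1 - (‖z‖)^2) * ‖h z‖))) :
    ContDiffOn ℝ 2 u₁ (Metric.ball (0:ℂ) 1) ∧
    (∀ z ∈ Metric.ball (0:ℂ) 1,
      lap u₁ z = 4 * (‖h z‖)^2 * Real.exp (2 * u₁ z)) ∧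
    (∀ ξ : ℂ, ‖ξ‖ = 1 →
      Filter.Tendsto u₁ (nhdsWithin ξ (Metric.ball (0:ℂ) 1)) Filter.atTop) := by
  -- basic facts on the ball
  have hball : ∀ z ∈ Metric.ball (0:ℂ) 1, ‖z‖ < 1 := by
    intro z hz; simpa using hz
  have hDpos : ∀ z ∈ Metric.ball (0:ℂ) 1, (0:ℝ) < 1 - Complex.normSq z := by
    intro z hz
    have : ‖z‖ < 1 := hball z hz
    have h2 : Complex.normSq z < 1 := by
      rw [← Complex.sq_norm]
      nlinarith [norm_nonneg z]
    linarith
  have hone : ∀ z ∈ Metric.ball (0:ℂ) 1, (1:ℂ) - z ≠ 0 := by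
    intro z hz
    have : ‖z‖ < 1 := hball z hz
    intro hc
    have hz1 : z = 1 := (sub_eq_zero.mp hc).symm
    rw [hz1] at this
    simp at this
  have habs : ∀ z, ‖h z‖ = Real.exp ((-(1 + z) / (1 - z)).re) := by
    intro z; rw [hdef]; exact Complex.norm_exp _
  -- key identity
  have hkey : ∀ z ∈ Metric.ball (0:ℂ) 1, u₁ z = Usol z := by
    intro z hz
    have hD := hDpos z hz
    have h1z := hone z hz
    have hre : (-(1 + z) / (1 - z)).re = -(((1+z)/(1-z)).re) := by
      rw [neg_div, Complex.neg_re]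
    rw [hu₁, habs, hre, Complex.sq_norm, one_div, Real.log_inv,
      Real.log_mul hD.ne' (Real.exp_pos _).ne', Real.log_exp, Usol]
    ring
  refine ⟨?_, ?_, ?_⟩
  · -- ContDiffOn
    have h2 : ContDiff ℝ 2 Complex.normSq := by
      have he : Complex.normSq = fun z : ℂ => z.re*z.re + z.im*z.im :=
        funext Complex.normSq_apply
      rw [he]
      exact (Complex.reCLM.contDiff.mul Complex.reCLM.contDiff).add
        (Complex.imCLM.contDiff.mul Complex.imCLM.contDiff)
    have hc1 : ContDiffOn ℝ 2 (fun z : ℂ => -Real.log (1 - Complex.normSq z))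
        (Metric.ball (0:ℂ) 1) := by
      have hN : ContDiff ℝ 2 (fun z : ℂ => 1 - Complex.normSq z) := contDiff_const.sub h2
      exact (Real.contDiffOn_log.comp hN.contDiffOn
        (fun z hz => Set.mem_compl_singleton_iff.mpr (hDpos z hz).ne')).neg
    have hc2 : ContDiffOn ℝ 2 (fun z : ℂ => ((1+z)/(1-z)).re) (Metric.ball (0:ℂ) 1) := by
      have hdiv : ContDiffOn ℂ 2 (fun z : ℂ => (1+z)/(1-z)) (Metric.ball (0:ℂ) 1) :=
        ContDiffOn.div ((contDiff_const.add contDiff_id).contDiffOn)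
          ((contDiff_const.sub contDiff_id).contDiffOn) (fun z hz => hone z hz)
      exact Complex.reCLM.contDiff.comp_contDiffOn (hdiv.restrict_scalars ℝ)
    exact (hc1.add hc2).congr (fun z hz => hkey z hz)
  · -- the PDE
    intro z hz
    have hopen : Metric.ball (0:ℂ) 1 ∈ nhds z := Metric.isOpen_ball.mem_nhds hz
    have hfder : ∀ w ∈ Metric.ball (0:ℂ) 1, fderiv ℝ u₁ w = Lc w := by
      intro w hw
      have heq : u₁ =ᶠ[nhds w] Usol :=
        Filter.eventuallyEq_of_mem (Metric.isOpen_ball.mem_nhds hw) hkey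
      rw [heq.fderiv_eq, (hasFDerivAt_Usol w (hDpos w hw).ne' (hone w hw)).fderiv]
    have hLc1 : ∀ w : ℂ, Lc w 1 = (1 - Complex.normSq w)⁻¹ * (2 * w.re) + (2/(1-w)^2).re := by
      intro w
      simp [Lc, Nclm_apply, reMul_apply]
    have hLcI : ∀ w : ℂ, Lc w Complex.I
        = (1 - Complex.normSq w)⁻¹ * (2 * w.im) + (Complex.I * (2/(1-w)^2)).re := by
      intro w
      simp [Lc, Nclm_apply, reMul_apply]
    have he1 : (fun w => fderiv ℝ u₁ w 1)
        =ᶠ[nhds z] (fun w : ℂ => (1 - Complex.normSq w)⁻¹ * (2 * w.re) + (2/(1-w)^2).re) :=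
      Filter.eventuallyEq_of_mem hopen (fun w hw => by rw [hfder w hw, hLc1])
    have he2 : (fun w => fderiv ℝ u₁ w Complex.I)
        =ᶠ[nhds z] (fun w : ℂ => (1 - Complex.normSq w)⁻¹ * (2 * w.im)
          + (Complex.I * (2/(1-w)^2)).re) :=
      Filter.eventuallyEq_of_mem hopen (fun w hw => by rw [hfder w hw, hLcI])
    have hD := hDpos z hz
    have h1z := hone z hz
    have hg : HasFDerivAt (fun w : ℂ => 1 - Complex.normSq w) (-Nclm z) z :=
      (hasFDerivAt_normSq' z).const_sub 1
    have hinv := (hasDerivAt_inv hD.ne').comp_hasFDerivAt z hg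
    have hre2 : HasFDerivAt (fun w : ℂ => 2 * w.re)
        ((2:ℝ) • (Complex.reCLM : ℂ →L[ℝ] ℝ)) z := Complex.reCLM.hasFDerivAt.const_mul 2
    have him2 : HasFDerivAt (fun w : ℂ => 2 * w.im)
        ((2:ℝ) • (Complex.imCLM : ℂ →L[ℝ] ℝ)) z := Complex.imCLM.hasFDerivAt.const_mul 2
    have hpd := (hinv.mul hre2).add (holoRe (hasDerivAt_G z h1z))
    have hGI : HasDerivAt (fun w : ℂ => Complex.I * (2/(1-w)^2))
        (Complex.I * (4/(1-z)^3)) z := (hasDerivAt_G z h1z).const_mul Complex.I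
    have hqd := (hinv.mul him2).add (holoRe hGI)
    simp only [Function.comp_def] at hpd hqd
    simp only [Pi.mul_def, Pi.add_def] at hpd hqd
    have hrhs : 4 * (‖h z‖)^2 * Real.exp (2 * u₁ z)
        = 4 / (1 - Complex.normSq z)^2 := by
      have ha : 0 < ‖h z‖ := by
        rw [hdef]; exact norm_pos_iff.mpr (Complex.exp_ne_zero _)
      have hb' : 1 - (‖z‖)^2 = 1 - Complex.normSq z := by rw [Complex.sq_norm]
      have hbpos : 0 < 1 - (‖z‖)^2 := by rw [hb']; exact hD
      have hpos : 0 < 1 / ((1 - (‖z‖)^2) * ‖h z‖) :=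
        one_div_pos.mpr (mul_pos hbpos ha)
      rw [hu₁, show (2:ℝ) * Real.log (1 / ((1 - (‖z‖)^2) * ‖h z‖))
          = Real.log ((1 / ((1 - (‖z‖)^2) * ‖h z‖))^2) by
            rw [Real.log_pow]; push_cast; ring,
        Real.exp_log (by positivity), hb']
      field_simp
    unfold lap
    rw [he1.fderiv_eq, he2.fderiv_eq, hpd.fderiv, hqd.fderiv, hrhs]
    simp only [ContinuousLinearMap.add_apply, ContinuousLinearMap.coe_smul',
      Pi.smul_apply, ContinuousLinearMap.neg_apply, reMul_apply, Nclm_apply,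
      smul_eq_mul, Complex.one_re, Complex.one_im, Complex.I_re, Complex.I_im,
      Complex.reCLM_apply, Complex.imCLM_apply]
    rw [show Complex.I * (Complex.I * (4/(1-z)^3)) = -(4/(1-z)^3) by
      rw [← mul_assoc, Complex.I_mul_I, neg_one_mul], Complex.neg_re, one_mul]
    have hN : Complex.normSq z = z.re*z.re + z.im*z.im := Complex.normSq_apply z
    have hsne : (1:ℝ) - (z.re*z.re + z.im*z.im) ≠ 0 := by rw [← hN]; exact hD.ne'
    rw [hN]
    field_simp
    ring
  · -- boundary blow-up
    intro ξ hξ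
    have hge : ∀ z ∈ Metric.ball (0:ℂ) 1, -Real.log (1 - Complex.normSq z) ≤ u₁ z := by
      intro z hz
      rw [hkey z hz, Usol]
      have hnn : 0 ≤ ((1+z)/(1-z)).re := by
        rw [Complex.div_re]
        have hD := hDpos z hz
        have h0 : 0 < Complex.normSq (1-z) := Complex.normSq_pos.mpr (hone z hz)
        rw [← add_div]
        apply div_nonneg _ h0.le
        rw [Complex.normSq_apply] at hD
        simp only [Complex.add_re, Complex.sub_re, Complex.one_re, Complex.add_im,
          Complex.sub_im, Complex.one_im]
        nlinarith
      linarith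
    have h1 : Filter.Tendsto (fun z : ℂ => 1 - Complex.normSq z)
        (nhdsWithin ξ (Metric.ball (0:ℂ) 1)) (nhdsWithin 0 (Set.Ioi 0)) := by
      apply tendsto_nhdsWithin_of_tendsto_nhds_of_eventually_within
      · have hc : Continuous fun z : ℂ => 1 - Complex.normSq z :=
          continuous_const.sub Complex.continuous_normSq
        have hv : (1:ℝ) - Complex.normSq ξ = 0 := by
          have : Complex.normSq ξ = 1 := by rw [← Complex.sq_norm, hξ]; norm_num
          rw [this]; ring
        have := (hc.tendsto ξ).mono_left (nhdsWithin_le_nhds (s := Metric.ball (0:ℂ) 1))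
        rwa [hv] at this
      · filter_upwards [self_mem_nhdsWithin] with z hz using hDpos z hz
    have htend : Filter.Tendsto (fun z : ℂ => -Real.log (1 - Complex.normSq z))
        (nhdsWithin ξ (Metric.ball (0:ℂ) 1)) Filter.atTop := by
      have h2 := Real.tendsto_log_nhdsGT_zero.comp h1
      exact Filter.tendsto_neg_atBot_atTop.comp h2
    exact Filter.tendsto_atTop_mono' _
      (Filter.eventually_of_mem self_mem_nhdsWithin (fun z hz => hge z hz)) htend
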